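/- Let ε > 0 and let (γ, ν) with γ_{ij} > 0 minimize Σ_{ij} c_{ij} γ_{ij} + ε Σ_{ij} γ_{ij}(ln γ_{ij} − 1) + E(ν) over nonnegative γ with row sums μ and ν equal to the column sums of γ, where E is differentiable with ∂E/∂ν_j = f_j(ν_j) + Σ_k φ_{kj} ν_k. Then there exist a_i > 0 such that γ_{ij} = a_i · exp(−(c_{ij} + f_j(ν_j) + Σ_k φ_{kj} ν_k)/ε) for all i, j, where a_i = μ_i / Σ_{j'} exp(−(c_{ij'} + f_{j'}(ν_{j'}) + Σ_k φ_{kj'} ν_k)/ε). -/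

import Mathlib

open Finset

lemma sum_update_eq {J α : Type*} [Fintype J] [DecidableEq J]
    (h : J → α → ℝ) (w : J → α) (j0 : J) (u : α) :
    ∑ j, h j (Function.update w j0 u j) = ∑ j, h j (w j) - h j0 (w j0) + h j0 u := by
  have h1 : ∀ j, h j (Function.update w j0 u j)
      = Function.update (fun j => h j (w j)) j0 (h j0 u) j := by
    intro j
    by_cases hj : j = j0
    · subst hj; simp
    · simp [Function.update_of_ne hj]
  rw [Finset.sum_congr rfl (fun j _ => h1 j),
    Finset.sum_update_of_mem (Finset.mem_univ j0)]
  have h2 : ∑ j, h j (w j) = ∑ j ∈ Finset.univ \ {j0}, h j (w j) + h j0 (w j0) := by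
    rw [Finset.sum_eq_sum_sdiff_singleton_add (Finset.mem_univ j0)]
  rw [h2]; ring

lemma sum2_update {I J : Type*} [Fintype I] [Fintype J] [DecidableEq I] [DecidableEq J]
    (g : I → J → ℝ → ℝ) (γ : I → J → ℝ) (i0 : I) {j₁ j₂ : J} (hj : j₁ ≠ j₂) (u v : ℝ) :
    ∑ i, ∑ j, g i j ((Function.update γ i0
        (Function.update (Function.update (γ i0) j₁ u) j₂ v)) i j)
      = ∑ i, ∑ j, g i j (γ i j) - g i0 j₁ (γ i0 j₁) - g i0 j₂ (γ i0 j₂)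
        + g i0 j₁ u + g i0 j₂ v := by
  set r := Function.update (Function.update (γ i0) j₁ u) j₂ v with hr
  have A : ∑ i, ∑ j, g i j (Function.update γ i0 r i j)
      = ∑ i, ∑ j, g i j (γ i j) - (∑ j, g i0 j (γ i0 j)) + ∑ j, g i0 j (r j) :=
    sum_update_eq (fun i ρ => ∑ j, g i j (ρ j)) γ i0 r
  have B : ∑ j, g i0 j (r j)
      = ∑ j, g i0 j (Function.update (γ i0) j₁ u j)
        - g i0 j₂ ((Function.update (γ i0) j₁ u) j₂) + g i0 j₂ v :=
    sum_update_eq (fun j x => g i0 j x) _ j₂ v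
  have C : ∑ j, g i0 j (Function.update (γ i0) j₁ u j)
      = ∑ j, g i0 j (γ i0 j) - g i0 j₁ (γ i0 j₁) + g i0 j₁ u :=
    sum_update_eq (fun j x => g i0 j x) (γ i0) j₁ u
  have hval : (Function.update (γ i0) j₁ u) j₂ = γ i0 j₂ :=
    Function.update_of_ne (Ne.symm hj) _ _
  rw [A, B, C, hval]; ring

lemma ent_deriv {x : ℝ} (hx : 0 < x) :
    HasDerivAt (fun y : ℝ => y * (Real.log y - 1)) (Real.log x) x := by
  have := (hasDerivAt_id x).mul ((Real.hasDerivAt_log hx.ne').sub_const 1)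
  refine this.congr_deriv ?_
  simp [hx.ne']

lemma E_partial {J : Type*} [Fintype J] [DecidableEq J]
    (f : J → ℝ → ℝ) (φ : J → J → ℝ) (E : (J → ℝ) → ℝ)
    (hE : ∀ (ν : J → ℝ) (j : J),
      HasDerivAt (fun t => E (Function.update ν j t))
        (f j (ν j) + ∑ k, φ k j * ν k) (ν j))
    (w : J → ℝ) (j : J) (x : ℝ) :
    HasDerivAt (fun s => E (Function.update w j s))
      (f j x + ∑ k, φ k j * (Function.update w j x) k) x := by
  have := hE (Function.update w j x) j
  simpa [Function.update_idem] using this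

lemma E_ident {J : Type*} [Fintype J] [DecidableEq J]
    (f : J → ℝ → ℝ) (φ : J → J → ℝ) (E : (J → ℝ) → ℝ)
    (hE : ∀ (ν : J → ℝ) (j : J),
      HasDerivAt (fun t => E (Function.update ν j t))
        (f j (ν j) + ∑ k, φ k j * ν k) (ν j))
    (ν : J → ℝ) {j₁ j₂ : J} (hj : j₁ ≠ j₂) (t : ℝ) :
    E (Function.update (Function.update ν j₁ (ν j₁ + t)) j₂ (ν j₂ - t))
      = E (Function.update ν j₁ (ν j₁ + t)) + E (Function.update ν j₂ (ν j₂ - t))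
        - E ν - φ j₁ j₂ * t ^ 2 := by
  set w := Function.update ν j₁ (ν j₁ + t) with hw
  have hwj₂ : w j₂ = ν j₂ := Function.update_of_ne (Ne.symm hj) _ _
  set h : ℝ → ℝ := fun x =>
    E (Function.update w j₂ x) - E (Function.update ν j₂ x) - φ j₁ j₂ * t * x with hh
  have hder : ∀ x, HasDerivAt h 0 x := by
    intro x
    have h1 := E_partial f φ E hE w j₂ x
    have h2 := E_partial f φ E hE ν j₂ x
    have h3 : HasDerivAt (fun x : ℝ => φ j₁ j₂ * t * x) (φ j₁ j₂ * t) x := by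
      simpa using (hasDerivAt_id x).const_mul (φ j₁ j₂ * t)
    have := (h1.sub h2).sub h3
    refine this.congr_deriv ?_
    have hsum : ∑ k, φ k j₂ * (Function.update w j₂ x) k
        - ∑ k, φ k j₂ * (Function.update ν j₂ x) k = φ j₁ j₂ * t := by
      rw [← Finset.sum_sub_distrib]
      have : ∀ k, φ k j₂ * (Function.update w j₂ x) k
          - φ k j₂ * (Function.update ν j₂ x) k
          = if k = j₁ then φ j₁ j₂ * t else 0 := by
        intro k
        by_cases hk2 : k = j₂
        · subst hk2; simp [if_neg (Ne.symm hj)]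
        · by_cases hk1 : k = j₁
          · subst hk1
            simp [Function.update_of_ne hk2, hw, Function.update_self]
            ring
          · simp [Function.update_of_ne hk2, hw, Function.update_of_ne hk1, hk1]
      rw [Finset.sum_congr rfl (fun k _ => this k)]
      simp
    linarith [hsum]
  have hconst : h (ν j₂ - t) = h (ν j₂) :=
    is_const_of_deriv_eq_zero (fun x => (hder x).differentiableAt)
      (fun x => (hder x).deriv) _ _
  have e1 : Function.update w j₂ (ν j₂) = w := by
    rw [← hwj₂]; exact Function.update_eq_self _ _
  have e2 : Function.update ν j₂ (ν j₂) = ν := Function.update_eq_self _ _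
  simp only [hh, e1, e2] at hconst
  nlinarith [hconst]

theorem gibbs_form_entropic_CN
    {I J : Type*} [Fintype I] [Fintype J] [DecidableEq J]
    (ε : ℝ) (hε : 0 < ε)
    (μ : I → ℝ) (hμ0 : ∀ i, 0 ≤ μ i) (hμ1 : ∑ i, μ i = 1)
    (c : I → J → ℝ)
    (f : J → ℝ → ℝ) (φ : J → J → ℝ) (hφ : ∀ k j, φ k j = φ j k)
    (E : (J → ℝ) → ℝ)
    (hE : ∀ (ν : J → ℝ) (j : J),
      HasDerivAt (fun t => E (Function.update ν j t))
        (f j (ν j) + ∑ k, φ k j * ν k) (ν j))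
    (γ : I → J → ℝ) (ν : J → ℝ)
    (hγpos : ∀ i j, 0 < γ i j)
    (hγ1 : ∀ i, ∑ j, γ i j = μ i)
    (hγ2 : ∀ j, ∑ i, γ i j = ν j)
    (hmin : ∀ γ' : I → J → ℝ, (∀ i j, 0 ≤ γ' i j) → (∀ i, ∑ j, γ' i j = μ i) →
      (∑ i, ∑ j, c i j * γ i j + ε * ∑ i, ∑ j, γ i j * (Real.log (γ i j) - 1) + E ν)
      ≤ (∑ i, ∑ j, c i j * γ' i j + ε * ∑ i, ∑ j, γ' i j * (Real.log (γ' i j) - 1)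
          + E (fun j => ∑ i, γ' i j))) :
    ∃ a : I → ℝ, (∀ i, 0 < a i) ∧
      (∀ i, a i = μ i / ∑ j', Real.exp (-(c i j' + f j' (ν j') + ∑ k, φ k j' * ν k) / ε)) ∧
      (∀ i j, γ i j = a i * Real.exp (-(c i j + f j (ν j) + ∑ k, φ k j * ν k) / ε)) := by
  classical
  set d : J → ℝ := fun j => f j (ν j) + ∑ k, φ k j * ν k with hd
  -- J is nonempty
  have hJ : Nonempty J := by
    by_contra h
    rw [not_nonempty_iff] at h
    have h0 : ∀ i, μ i = 0 := fun i => by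
      rw [← hγ1 i]; simp
    rw [Finset.sum_congr rfl (fun i _ => h0 i)] at hμ1
    simp at hμ1
  -- First-order condition
  have hfoc : ∀ (i0 : I) (j₁ j₂ : J), j₁ ≠ j₂ →
      c i0 j₁ + ε * Real.log (γ i0 j₁) + d j₁
        = c i0 j₂ + ε * Real.log (γ i0 j₂) + d j₂ := by
    intro i0 j₁ j₂ hj
    set p := γ i0 j₁ with hpdef
    set q := γ i0 j₂ with hqdef
    have hp : 0 < p := hγpos i0 j₁
    have hq : 0 < q := hγpos i0 j₂
    set Γ : ℝ → I → J → ℝ := fun t => Function.update γ i0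
      (Function.update (Function.update (γ i0) j₁ (p + t)) j₂ (q - t)) with hΓ
    set Φ : ℝ → ℝ := fun t =>
      ∑ i, ∑ j, c i j * Γ t i j + ε * ∑ i, ∑ j, Γ t i j * (Real.log (Γ t i j) - 1)
        + E (fun j => ∑ i, Γ t i j) with hΦ
    set CC := ∑ i, ∑ j, c i j * γ i j with hCC
    set BB := ∑ i, ∑ j, γ i j * (Real.log (γ i j) - 1) with hBB
    set G : ℝ → ℝ := fun t =>
      (CC - c i0 j₁ * p - c i0 j₂ * q + c i0 j₁ * (p + t) + c i0 j₂ * (q - t))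
      + ε * (BB - p * (Real.log p - 1) - q * (Real.log q - 1)
          + (p + t) * (Real.log (p + t) - 1) + (q - t) * (Real.log (q - t) - 1))
      + (E (Function.update ν j₁ (ν j₁ + t)) + E (Function.update ν j₂ (ν j₂ - t))
          - E ν - φ j₁ j₂ * t ^ 2) with hG
    -- column sums of Γ t
    have hcol : ∀ t, (fun j => ∑ i, Γ t i j)
        = Function.update (Function.update ν j₁ (ν j₁ + t)) j₂ (ν j₂ - t) := by
      intro t
      funext j
      have hD : ∑ i, Γ t i j = ∑ i, γ i j - γ i0 j
          + Function.update (Function.update (γ i0) j₁ (p + t)) j₂ (q - t) j :=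
        sum_update_eq (fun i ρ => ρ j) γ i0 _
      rw [hD, hγ2 j]
      by_cases h2 : j = j₂
      · subst h2; simp [Function.update_self, Function.update_of_ne (Ne.symm hj)]
        try ring
      · rw [Function.update_of_ne h2, Function.update_of_ne h2]
        by_cases h1 : j = j₁
        · subst h1; simp [Function.update_self]; ring
        · rw [Function.update_of_ne h1, Function.update_of_ne h1]; ring
    -- Φ = G
    have hΦG : ∀ t, Φ t = G t := by
      intro t
      have hc := sum2_update (fun i j x => c i j * x) γ i0 hj (p + t) (q - t)
      have he := sum2_update (fun i j x => x * (Real.log x - 1)) γ i0 hj (p + t) (q - t)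
      have hEpart : E (fun j => ∑ i, Γ t i j)
          = E (Function.update ν j₁ (ν j₁ + t)) + E (Function.update ν j₂ (ν j₂ - t))
            - E ν - φ j₁ j₂ * t ^ 2 := by
        rw [hcol t]
        exact E_ident f φ E hE ν hj t
      simp only [hΦ, hΓ] at *
      rw [hc, he, hEpart]
      try ring
    -- Φ has a local min at 0
    have hδ : 0 < min p q := lt_min hp hq
    have hΦ0 : Φ 0 = ∑ i, ∑ j, c i j * γ i j
        + ε * ∑ i, ∑ j, γ i j * (Real.log (γ i j) - 1) + E ν := by
      have hΓ0 : Γ 0 = γ := by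
        simp only [hΓ, add_zero, sub_zero, ← hpdef, ← hqdef]
        rw [Function.update_eq_self, Function.update_eq_self, Function.update_eq_self]
      rw [hΦ]
      simp only [hΓ0]
      congr 1
      congr 1
      funext j
      exact hγ2 j
    have hloc : IsLocalMin Φ 0 := by
      filter_upwards [Metric.ball_mem_nhds (0 : ℝ) hδ] with t ht
      rw [Real.ball_eq_Ioo] at ht
      obtain ⟨ht1, ht2⟩ := ht
      simp only [zero_sub, zero_add] at ht1 ht2
      have ht1' : -min p q < t := ht1
      have hnn : ∀ i j, 0 ≤ Γ t i j := by
        intro i j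
        by_cases hi : i = i0
        · rw [hi]
          by_cases h2 : j = j₂
          · subst h2
            simp only [hΓ, Function.update_self]
            have : min p q ≤ q := min_le_right _ _
            linarith
          · rw [hΓ]
            simp only [Function.update_self]
            rw [Function.update_of_ne h2]
            by_cases h1 : j = j₁
            · subst h1
              rw [Function.update_self]
              have : min p q ≤ p := min_le_left _ _
              linarith
            · rw [Function.update_of_ne h1]
              exact (hγpos i0 j).le
        · rw [hΓ]
          simp only [Function.update_of_ne hi]
          exact (hγpos i j).le
      have hrow : ∀ i, ∑ j, Γ t i j = μ i := by
        intro i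
        by_cases hi : i = i0
        · rw [hi]
          have := sum_update_eq (fun j (x : ℝ) => x)
            (Function.update (γ i0) j₁ (p + t)) j₂ (q - t)
          have h2 := sum_update_eq (fun j (x : ℝ) => x) (γ i0) j₁ (p + t)
          have hv : Function.update (γ i0) j₁ (p + t) j₂ = q :=
            Function.update_of_ne (Ne.symm hj) _ _
          rw [hΓ]
          simp only [Function.update_self]
          rw [this, h2, hv, hγ1 i0]
          ring
        · rw [hΓ]
          simp only [Function.update_of_ne hi]
          exact hγ1 i
      rw [hΦ0]
      exact hmin (Γ t) hnn hrow
    -- derivative of G at 0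
    set Dval := (c i0 j₁ - c i0 j₂) + ε * (Real.log p - Real.log q) + (d j₁ - d j₂)
      with hDval
    have hinp : HasDerivAt (fun t : ℝ => p + t) 1 0 := by
      simpa using (hasDerivAt_id (0 : ℝ)).const_add p
    have hinq : HasDerivAt (fun t : ℝ => q - t) (-1) 0 := by
      simpa [sub_eq_add_neg] using ((hasDerivAt_id (0 : ℝ)).neg.const_add q)
    have h2 : HasDerivAt (fun t : ℝ => (p + t) * (Real.log (p + t) - 1)) (Real.log p) 0 := by
      have hgp : HasDerivAt (fun y : ℝ => y * (Real.log y - 1))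
          (Real.log (p + 0)) ((fun t : ℝ => p + t) 0) := by
        simp only [add_zero]; exact ent_deriv hp
      have := hgp.comp 0 hinp
      simp at this; exact this
    have h3 : HasDerivAt (fun t : ℝ => (q - t) * (Real.log (q - t) - 1))
        (-Real.log q) 0 := by
      have hgq : HasDerivAt (fun y : ℝ => y * (Real.log y - 1))
          (Real.log (q - 0)) ((fun t : ℝ => q - t) 0) := by
        simp only [sub_zero]; exact ent_deriv hq
      have := hgq.comp 0 hinq
      simp at this; exact this
    have hinp' : HasDerivAt (fun t : ℝ => ν j₁ + t) 1 0 := by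
      simpa using (hasDerivAt_id (0 : ℝ)).const_add (ν j₁)
    have hinq' : HasDerivAt (fun t : ℝ => ν j₂ - t) (-1) 0 := by
      simpa [sub_eq_add_neg] using ((hasDerivAt_id (0 : ℝ)).neg.const_add (ν j₂))
    have h4 : HasDerivAt (fun t : ℝ => E (Function.update ν j₁ (ν j₁ + t))) (d j₁) 0 := by
      have hg : HasDerivAt (fun s => E (Function.update ν j₁ s)) (d j₁)
          ((fun t : ℝ => ν j₁ + t) 0) := by
        simp only [add_zero]
        exact hE ν j₁
      have := hg.comp 0 hinp'
      simp at this; exact this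
    have h5 : HasDerivAt (fun t : ℝ => E (Function.update ν j₂ (ν j₂ - t))) (-(d j₂)) 0 := by
      have hg : HasDerivAt (fun s => E (Function.update ν j₂ s)) (d j₂)
          ((fun t : ℝ => ν j₂ - t) 0) := by
        simp only [sub_zero]
        exact hE ν j₂
      have := hg.comp 0 hinq'
      simp at this; exact this
    have h6 : HasDerivAt (fun t : ℝ => φ j₁ j₂ * t ^ 2) 0 0 := by
      simpa using (hasDerivAt_pow 2 (0 : ℝ)).const_mul (φ j₁ j₂)
    have hA : HasDerivAt (fun t : ℝ =>
        CC - c i0 j₁ * p - c i0 j₂ * q + c i0 j₁ * (p + t) + c i0 j₂ * (q - t))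
        (c i0 j₁ - c i0 j₂) 0 := by
      have := (((hasDerivAt_const (0:ℝ) (CC - c i0 j₁ * p - c i0 j₂ * q)).add
        (hinp.const_mul (c i0 j₁))).add (hinq.const_mul (c i0 j₂)))
      refine this.congr_deriv ?_
      ring
    have hB : HasDerivAt (fun t : ℝ =>
        ε * (BB - p * (Real.log p - 1) - q * (Real.log q - 1)
          + (p + t) * (Real.log (p + t) - 1) + (q - t) * (Real.log (q - t) - 1)))
        (ε * (Real.log p - Real.log q)) 0 := by
      have := (((hasDerivAt_const (0:ℝ)
        (BB - p * (Real.log p - 1) - q * (Real.log q - 1))).add h2).add h3).const_mul ε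
      refine this.congr_deriv ?_
      ring
    have hC : HasDerivAt (fun t : ℝ =>
        E (Function.update ν j₁ (ν j₁ + t)) + E (Function.update ν j₂ (ν j₂ - t))
          - E ν - φ j₁ j₂ * t ^ 2) (d j₁ - d j₂) 0 := by
      have := ((h4.add h5).sub_const (E ν)).sub h6
      refine this.congr_deriv ?_
      ring
    have hderG : HasDerivAt G Dval 0 := by
      have := (hA.add hB).add hC
      exact this
    have hderΦ : HasDerivAt Φ Dval 0 := by
      have hfun : Φ = G := funext hΦG
      rw [hfun]
      exact hderG
    have hzero : Dval = 0 := hloc.hasDerivAt_eq_zero hderΦ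
    rw [hDval] at hzero
    have hεlog : ε * (Real.log p - Real.log q)
        = ε * Real.log p - ε * Real.log q := by ring
    linarith [hzero]
  -- assemble
  obtain ⟨j₀⟩ := hJ
  set S : I → ℝ := fun i => ∑ j', Real.exp (-(c i j' + f j' (ν j') + ∑ k, φ k j' * ν k) / ε)
    with hS
  have hSpos : ∀ i, 0 < S i := by
    intro i
    apply Finset.sum_pos (fun j _ => Real.exp_pos _)
    exact ⟨j₀, Finset.mem_univ j₀⟩
  set b : I → ℝ := fun i => Real.exp ((c i j₀ + ε * Real.log (γ i j₀) + d j₀) / ε) with hb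
  have hkey : ∀ i j, γ i j
      = b i * Real.exp (-(c i j + f j (ν j) + ∑ k, φ k j * ν k) / ε) := by
    intro i j
    have hfoc' : c i j + ε * Real.log (γ i j) + d j
        = c i j₀ + ε * Real.log (γ i j₀) + d j₀ := by
      by_cases hjj : j = j₀
      · subst hjj; rfl
      · exact hfoc i j j₀ hjj
    have hlog : Real.log (γ i j)
        = ((c i j₀ + ε * Real.log (γ i j₀) + d j₀) - c i j - d j) / ε := by
      field_simp
      linarith [hfoc']
    have : γ i j = Real.exp (Real.log (γ i j)) := (Real.exp_log (hγpos i j)).symm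
    rw [this, hlog, hb]
    rw [← Real.exp_add]
    congr 1
    rw [hd]
    simp only []
    field_simp
    ring
  have hbS : ∀ i, μ i = b i * S i := by
    intro i
    rw [← hγ1 i, hS, Finset.mul_sum]
    exact Finset.sum_congr rfl (fun j _ => hkey i j)
  refine ⟨b, ?_, ?_, hkey⟩
  · intro i; exact Real.exp_pos _
  · intro i
    show b i = μ i / S i
    rw [hbS i, mul_div_assoc, div_self (hSpos i).ne', mul_one]
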